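/- Let (M,τ) be a tracial von Neumann algebra represented on a Hilbert space H, and suppose ξ ∈ H is left L-bounded with ⟨aξ,ξ⟩ = τ(ab') for a positive b' ∈ M with ‖b'‖ ≤ L. Define f(t) = min(1, t^{−1/2}) on (0,L] (with f(0)=1), and set b = f(b') via functional calculus and η = bξ. Then η is left 1-bounded: for all positive a ∈ M, ⟨aη,η⟩ ≤ τ(a). -/

import Mathlib

open scoped InnerProductSpace

private lemma fcont15 : ContinuousOn
    (fun t : ℝ => if t = 0 then 1 else min 1 (Real.sqrt t)⁻¹) (Set.Ici (0:ℝ)) := by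
  have hg : Continuous (fun t : ℝ => min 1 (Real.sqrt (max t 1))⁻¹) := by
    refine Continuous.min continuous_const ?_
    refine Continuous.inv₀ (Real.continuous_sqrt.comp (continuous_id.max continuous_const)) ?_
    intro t
    have h1 : (1:ℝ) ≤ max t 1 := le_max_right _ _
    have := Real.sqrt_pos.mpr (lt_of_lt_of_le one_pos h1)
    exact ne_of_gt this
  refine ContinuousOn.congr hg.continuousOn ?_
  intro t ht
  simp only [Set.mem_Ici] at ht
  rcases eq_or_lt_of_le ht with h0 | h0
  · simp [← h0, Real.sqrt_one]
  rcases le_or_gt 1 t with h1 | h1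
  · simp [ne_of_gt h0, max_eq_left h1]
  · have hmax : max t 1 = 1 := max_eq_right h1.le
    have hst : (1:ℝ) ≤ (Real.sqrt t)⁻¹ := by
      rw [le_inv_comm₀ one_pos (Real.sqrt_pos.mpr h0)]
      simpa using Real.sqrt_le_sqrt h1.le |>.trans_eq Real.sqrt_one
    simp [ne_of_gt h0, hmax, Real.sqrt_one, min_eq_left hst, min_eq_right hst]

/-- Let `(M,τ)` be a tracial von Neumann algebra represented on a Hilbert space `H`, and
suppose `ξ ∈ H` is left `L`-bounded with `⟨aξ, ξ⟩ = τ(a b')` for a positive `b' ∈ M` with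
`‖b'‖ ≤ L`.  Define `f(t) = min(1, t^{-1/2})` (with `f(0) = 1`), set `b = f(b')` via
continuous functional calculus, and `η = bξ`.  Then `η` is left `1`-bounded: for all positive
`a ∈ M`, `⟨aη, η⟩ ≤ τ(a)`. -/
theorem statement15
    {M : Type*} [CStarAlgebra M] [PartialOrder M] [StarOrderedRing M]
    {H : Type*} [NormedAddCommGroup H] [InnerProductSpace ℂ H] [CompleteSpace H]
    (π : M →⋆ₐ[ℂ] (H →L[ℂ] H)) (τ : M →ₗ[ℂ] ℂ)
    (hτpos : ∀ c : M, 0 ≤ c → 0 ≤ (τ c).re)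
    (hτ1 : τ 1 = 1)
    (hτtr : ∀ x y : M, τ (x * y) = τ (y * x))
    (L : ℝ) (ξ : H) (b' : M) (hb'0 : 0 ≤ b') (hb'L : ‖b'‖ ≤ L)
    (hrn : ∀ a : M, 0 ≤ a → (⟪π a ξ, ξ⟫_ℂ).re = (τ (a * b')).re) :
    ∀ a : M, 0 ≤ a →
      (⟪π a (π (cfc (fun t : ℝ => if t = 0 then 1 else min 1 (Real.sqrt t)⁻¹) b') ξ),
          π (cfc (fun t : ℝ => if t = 0 then 1 else min 1 (Real.sqrt t)⁻¹) b') ξ⟫_ℂ).re ≤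
        (τ a).re := by
  intro a ha
  set F : ℝ → ℝ := fun t => if t = 0 then 1 else min 1 (Real.sqrt t)⁻¹ with hFdef
  set b : M := cfc F b' with hbdef
  have hspec : ∀ x ∈ spectrum ℝ b', (0:ℝ) ≤ x := fun x hx =>
    spectrum_nonneg_of_nonneg hb'0 hx
  have hF : ContinuousOn F (spectrum ℝ b') := fcont15.mono hspec
  have hb : IsSelfAdjoint b := cfc_predicate F b'
  -- b * b' * b = cfc (min 1 ·) b'
  have hkey : b * b' * b = cfc (fun t : ℝ => min 1 t) b' := by
    have hid : cfc (id : ℝ → ℝ) b' = b' := cfc_id ℝ b'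
    have e1 : cfc (fun x : ℝ => F x * id x * F x) b' = b * b' * b := by
      rw [cfc_mul (fun x => F x * id x) F b' (hF.mul continuousOn_id) hF, cfc_mul F id b' hF continuousOn_id,
        hid, hbdef]
    rw [← e1]
    apply cfc_congr
    intro t ht
    have ht0 := hspec t ht
    rcases eq_or_lt_of_le ht0 with h0 | h0
    · simp [hFdef, ← h0]
    rcases le_or_gt t 1 with h1 | h1
    · have hst : (1:ℝ) ≤ (Real.sqrt t)⁻¹ := by
        rw [le_inv_comm₀ one_pos (Real.sqrt_pos.mpr h0)]
        simpa using Real.sqrt_le_sqrt h1 |>.trans_eq Real.sqrt_one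
      simp [hFdef, ne_of_gt h0, min_eq_left hst, min_eq_right h1, id]
    · have hst : (Real.sqrt t)⁻¹ ≤ 1 := by
        rw [inv_le_one_iff₀]
        right
        simpa using Real.sqrt_one.symm.trans_le (Real.sqrt_le_sqrt h1.le)
      have hs0 : Real.sqrt t ≠ 0 := ne_of_gt (Real.sqrt_pos.mpr h0)
      simp only [hFdef, ne_of_gt h0, if_neg, if_false, min_eq_right hst, min_eq_left h1.le, id]
      field_simp
      rw [Real.sq_sqrt h0.le]
  set c : M := cfc (fun t : ℝ => min 1 t) b' with hcdef
  have hc1 : c ≤ 1 := cfc_le_one _ _ (fun x _ => min_le_left _ _)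
  -- positivity of b * (a * b)
  have hbab : (0:M) ≤ b * (a * b) := by
    have := star_left_conjugate_nonneg ha b
    rwa [hb.star_eq, mul_assoc] at this
  -- inner product identity
  have hπb : ContinuousLinearMap.adjoint (π b) = π b := by
    rw [← ContinuousLinearMap.star_eq_adjoint, ← map_star, hb.star_eq]
  have hadj : ∀ z : H, ⟪π b z, ξ⟫_ℂ = ⟪z, π b ξ⟫_ℂ := by
    intro z
    conv_lhs => rw [← hπb]
    exact ContinuousLinearMap.adjoint_inner_left (π b) ξ z
  have h1 : ⟪π a (π b ξ), π b ξ⟫_ℂ = ⟪π (b * (a * b)) ξ, ξ⟫_ℂ := by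
    rw [map_mul, map_mul, ContinuousLinearMap.mul_apply, ContinuousLinearMap.mul_apply, hadj]
  -- trace manipulations
  have h2 : τ (b * (a * b) * b') = τ (a * (b * b' * b)) := by
    have e1 : b * (a * b) * b' = (b * a) * (b * b') := by simp only [mul_assoc]
    rw [e1, hτtr, show (b * b') * (b * a) = ((b * b' * b) * a) by simp only [mul_assoc], hτtr]
  -- final inequality : re (τ (a * c)) ≤ re (τ a)
  have h3 : (τ (a * c)).re ≤ (τ a).re := by
    set s : M := CFC.sqrt a with hsdef
    have hs : s * s = a := CFC.sqrt_mul_sqrt_self a ha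
    have hss : IsSelfAdjoint s := IsSelfAdjoint.of_nonneg (CFC.sqrt_nonneg a)
    have hpos : (0:M) ≤ s * (1 - c) * s := by
      have := star_left_conjugate_nonneg (sub_nonneg.mpr hc1) s
      rwa [hss.star_eq] at this
    have h4 : τ (a * (1 - c)) = τ (s * (1 - c) * s) := by
      rw [← hs, show s * s * (1 - c) = s * (s * (1 - c)) from mul_assoc _ _ _, hτtr,
        show (s * (1 - c)) * s = s * (1 - c) * s from rfl]
    have h5 : τ a - τ (a * c) = τ (a * (1 - c)) := by
      rw [mul_sub, mul_one, map_sub]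
    have h6 := hτpos _ hpos
    rw [← h4, ← h5, Complex.sub_re] at h6
    linarith
  rw [h1, hrn _ hbab, h2, hkey]
  exact h3
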